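/- Clopen Ramsey Theorem: for every front (F, rk_F) and every coloring c : F → {0,1}, there exists an infinite set H ⊆ ⋃F such that c is constant on F↾_H = {σ ∈ F : σ ⊆ H}. -/
import Mathlib


open Ordinal

universe u

/-! ### Basic wqo notions -/

/-- `P` is a wqo: there is no bad sequence. -/
def IsWqo (P : Type u) [Preorder P] : Prop :=
  ¬ ∃ f : ℕ → P, ∀ i j, i < j → ¬ f i ≤ f j

/-- `P` is well-founded as a quasi-order: no strictly descending ω-sequence. -/
def WFqo (P : Type u) [Preorder P] : Prop :=
  ¬ ∃ x : ℕ → P, ∀ i, x (i + 1) ≤ x i ∧ ¬ x i ≤ x (i + 1)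

/-! ### Fronts, identifying finite subsets of ℕ with their increasing enumerations -/

/-- `σ ⊑ τ`: `σ` is an initial segment of `τ`. -/
def InitSeg (σ τ : Finset ℕ) : Prop :=
  σ ⊆ τ ∧ ∀ a ∈ σ, ∀ b ∈ τ, b ≤ a → b ∈ σ

/-- `σ` is a (finite) initial segment of the set `X`. -/
def InitSegSet (σ : Finset ℕ) (X : Set ℕ) : Prop :=
  ↑σ ⊆ X ∧ ∀ a ∈ σ, ∀ b ∈ X, b ≤ a → b ∈ σ

/-- A front `(F, rk)`. -/
structure Front where
  F : Set (Finset ℕ)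
  infinite : F.Infinite
  antichain : ∀ σ ∈ F, ∀ τ ∈ F, InitSeg σ τ → σ = τ
  covers : ∀ X : Set ℕ, X.Infinite → (X ⊆ {n | ∃ σ ∈ F, n ∈ σ}) →
    ∃ σ ∈ F, InitSegSet σ X
  rk : Finset ℕ → Ordinal.{0}
  rk_strict : ∀ σ τ : Finset ℕ,
    (∃ ρ ∈ F, InitSeg σ ρ ∧ σ ≠ ρ) → (∃ ρ ∈ F, InitSeg τ ρ ∧ τ ≠ ρ) →
    InitSeg σ τ → σ ≠ τ → rk τ < rk σ

/-- The rank of the front is the rank of the empty sequence. -/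
def Front.rank (Fr : Front) : Ordinal.{0} := Fr.rk ∅

/-- `⋃ F`. -/
def Front.union (Fr : Front) : Set ℕ := {n | ∃ σ ∈ Fr.F, n ∈ σ}

/-- `σ ◁ τ`. -/
def Tri (σ τ : Finset ℕ) : Prop :=
  ∃ (hσ : σ.Nonempty) (hτ : τ.Nonempty),
    σ.min' hσ < τ.min' hτ ∧
    (InitSeg (σ.erase (σ.min' hσ)) τ ∨ InitSeg τ (σ.erase (σ.min' hσ)))

/-- `g` is a bad array on the front `Fr`. -/
def BadArray {P : Type u} [Preorder P] (Fr : Front) (g : Finset ℕ → P) : Prop :=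
  ∀ σ ∈ Fr.F, ∀ τ ∈ Fr.F, Tri σ τ → ¬ g σ ≤ g τ

/-- `P` is an `α`-wqo. -/
def IsAlphaWqo (α : Ordinal.{0}) (P : Type u) [Preorder P] : Prop :=
  WFqo P ∧ ∀ Fr : Front, Fr.rank < α → ∀ g : Finset ℕ → P, ¬ BadArray Fr g

/-! ### Transfinite sequences -/

/-- A transfinite sequence over `Q`: a function `|u| → Q` with `|u| > 0`. -/
structure TSeq (Q : Type u) where
  len : Ordinal.{0}
  pos : 0 < len
  toFun : {γ : Ordinal.{0} // γ < len} → Q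

namespace TSeq

variable {Q : Type u}

/-- Embeddability `u ⪯ v`. -/
def Emb [Preorder Q] (u v : TSeq Q) : Prop :=
  ∃ f : {γ // γ < u.len} → {γ // γ < v.len},
    (∀ a b, a.1 < b.1 → (f a).1 < (f b).1) ∧ ∀ a, u.toFun a ≤ v.toFun (f a)

/-- Weak embeddability `u ⪯* v`. -/
def WEmb [Preorder Q] (u v : TSeq Q) : Prop :=
  ∃ f : {γ // γ < u.len} → {γ // γ < v.len},
    (∀ a b, a.1 ≤ b.1 → (f a).1 ≤ (f b).1) ∧ ∀ a, u.toFun a ≤ v.toFun (f a)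

/-- The subsegment `u↾[γ, δ)`. -/
noncomputable def seg (u : TSeq Q) (γ δ : Ordinal.{0}) (h1 : γ < δ) (h2 : δ ≤ u.len) : TSeq Q where
  len := δ - γ
  pos := by rw [Ordinal.lt_sub]; simpa using h1
  toFun := fun ζ => u.toFun ⟨γ + ζ.1, lt_of_lt_of_le (Ordinal.lt_sub.mp ζ.2) h2⟩

/-- The tail `u↾[γ, |u|)`. -/
noncomputable def tail (u : TSeq Q) (γ : Ordinal.{0}) (h : γ < u.len) : TSeq Q :=
  u.seg γ u.len h le_rfl

/-- `u` is indecomposable: it embeds into each of its tails. -/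
def Indec [Preorder Q] (u : TSeq Q) : Prop :=
  ∀ γ (h : γ < u.len), u.Emb (u.tail γ h)

/-- `u` is weakly indecomposable. -/
def WIndec [Preorder Q] (u : TSeq Q) : Prop :=
  ∀ γ (h : γ < u.len), u.WEmb (u.tail γ h)

/-- `u ⊴ v`: cofinal embeddability. -/
def CofEmb [Preorder Q] (u v : TSeq Q) : Prop :=
  ∀ γ (h : γ < v.len), ∃ δ, ∃ h' : δ < u.len, (u.tail δ h').Emb (v.tail γ h)

/-- `u ⊴* v`: weak cofinal embeddability. -/
def WCofEmb [Preorder Q] (u v : TSeq Q) : Prop :=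
  ∀ γ (h : γ < v.len), ∃ δ, ∃ h' : δ < u.len, (u.tail δ h').WEmb (v.tail γ h)

end TSeq

/-! ### The hierarchy `V̇(Q)` -/

/-- Hereditarily countable, hereditarily nonempty sets with urelements from `Q`. -/
inductive Vdot (Q : Type u) : Type u where
  | up : Q → Vdot Q
  | sup : (ℕ → Vdot Q) → Vdot Q

namespace Vdot

variable {Q : Type u}

/-- Rank plus one for sets; `0` on urelements. -/
noncomputable def rkp : Vdot Q → Ordinal.{0}
  | .up _ => 0
  | .sup f => (⨆ n, rkp (f n)) + 1

/-- The rank of an element of `V̇(Q)` (`0` on urelements). -/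
noncomputable def rk : Vdot Q → Ordinal.{0}
  | .up _ => 0
  | .sup f => ⨆ n, rkp (f n)

/-- `x` is an urelement. -/
def IsUr (x : Vdot Q) : Prop := ∃ q, x = up q

/-- Membership in `V̇_α(Q)`: urelements, and sets of rank `< α`. -/
noncomputable def memV (α : Ordinal.{0}) (x : Vdot Q) : Prop := x.IsUr ∨ x.rk < α

/-- Auxiliary: `up p ≲ y` (equivalently `up p ≲* y`). -/
def leUp [Preorder Q] (p : Q) : Vdot Q → Prop
  | .up q => p ≤ q
  | .sup g => ∃ j, leUp p (g j)

/-- The relation `≲` on `V̇(Q)`. -/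
def vle [Preorder Q] : Vdot Q → Vdot Q → Prop
  | .up p, y => leUp p y
  | .sup _, .up _ => False
  | .sup f, .sup g => ∀ i, ∃ j, vle (f i) (g j)

/-- The relation `≲*` on `V̇(Q)`. -/
def vles [Preorder Q] : Vdot Q → Vdot Q → Prop
  | .up p, y => leUp p y
  | .sup f, .up q => ∀ i, vles (f i) (up q)
  | .sup f, .sup g => ∀ i, ∃ j, vles (f i) (g j)

/-- The support of an element of `V̇(Q)`. -/
def supp : Vdot Q → Set Q
  | .up q => {q}
  | .sup f => ⋃ n, supp (f n)

end Vdot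

section Galvin

/-- `X` accepts `s` (relative to the family `G`). -/
def GAcc (G : Set (Finset ℕ)) (s : Finset ℕ) (X : Set ℕ) : Prop :=
  ∀ Z : Set ℕ, Z.Infinite → Z ⊆ X → (∀ a ∈ s, ∀ z ∈ Z, a < z) →
    ∃ t ∈ G, s ⊆ t ∧ InitSegSet t (↑s ∪ Z)

/-- `X` rejects `s`. -/
def GRej (G : Set (Finset ℕ)) (s : Finset ℕ) (X : Set ℕ) : Prop :=
  ∀ Y : Set ℕ, Y.Infinite → Y ⊆ X → ¬ GAcc G s Y

lemma GAcc.mono {G : Set (Finset ℕ)} {s : Finset ℕ} {X Y : Set ℕ}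
    (h : GAcc G s X) (hYX : Y ⊆ X) : GAcc G s Y :=
  fun Z hZ hZY hgt => h Z hZ (hZY.trans hYX) hgt

lemma GRej.mono {G : Set (Finset ℕ)} {s : Finset ℕ} {X Y : Set ℕ}
    (h : GRej G s X) (hYX : Y ⊆ X) : GRej G s Y :=
  fun Z hZ hZY => h Z hZ (hZY.trans hYX)

/-- If `t ∈ G` then every set accepts `t`. -/
lemma gacc_self {G : Set (Finset ℕ)} {t : Finset ℕ} (ht : t ∈ G) (X : Set ℕ) :
    GAcc G t X := by
  intro Z hZ hZX hgt
  refine ⟨t, ht, subset_rfl, fun a ha => Or.inl ha, ?_⟩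
  rintro a ha b (hb | hb) hba
  · exact hb
  · exact absurd hba (not_le.mpr (hgt a ha b hb))

lemma exists_decide (G : Set (Finset ℕ)) (s : Finset ℕ) (X : Set ℕ) (hX : X.Infinite) :
    ∃ Y, Y ⊆ X ∧ Y.Infinite ∧ (GAcc G s Y ∨ GRej G s Y) := by
  by_cases h : GRej G s X
  · exact ⟨X, subset_rfl, hX, Or.inr h⟩
  · simp only [GRej, not_forall, not_not] at h
    obtain ⟨Y, hY, hYX, hA⟩ := h
    exact ⟨Y, hYX, hY, Or.inl hA⟩

lemma decide_all (G : Set (Finset ℕ)) (S : Finset (Finset ℕ)) (X : Set ℕ) (hX : X.Infinite) :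
    ∃ Y, Y ⊆ X ∧ Y.Infinite ∧ ∀ s ∈ S, GAcc G s Y ∨ GRej G s Y := by
  classical
  induction S using Finset.induction_on with
  | empty => exact ⟨X, subset_rfl, hX, by simp⟩
  | @insert a S ha ih =>
    obtain ⟨Y, hYX, hY, hdec⟩ := ih
    obtain ⟨Y', hY'Y, hY', hdec'⟩ := exists_decide G a Y hY
    refine ⟨Y', hY'Y.trans hYX, hY', ?_⟩
    intro s hs
    rcases Finset.mem_insert.mp hs with rfl | hs
    · exact hdec'
    · rcases hdec s hs with h | h
      · exact Or.inl (h.mono hY'Y)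
      · exact Or.inr (h.mono hY'Y)

/-- the fusion state -/
structure GSt (G : Set (Finset ℕ)) (U : Set ℕ) where
  T : Finset ℕ
  X : Set ℕ
  inf : X.Infinite
  sub : X ⊆ U
  Tsub : ↑T ⊆ U
  lt : ∀ a ∈ T, ∀ y ∈ X, a < y
  dec : ∀ s ∈ T.powerset, GAcc G s X ∨ GRej G s X

lemma exists_step {G : Set (Finset ℕ)} {U : Set ℕ} (p : GSt G U) :
    ∃ q : GSt G U, q.T = insert (sInf p.X) p.T ∧ q.X ⊆ p.X ∧
      ∀ y ∈ q.X, sInf p.X < y := by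
  classical
  set x := sInf p.X with hxdef
  have hx : x ∈ p.X := Nat.sInf_mem p.inf.nonempty
  have hX' : (p.X \ Set.Iic x).Infinite := p.inf.diff (Set.finite_Iic x)
  obtain ⟨Y, hYX, hY, hdec⟩ := decide_all G (insert x p.T).powerset (p.X \ Set.Iic x) hX'
  have hYpX : Y ⊆ p.X := hYX.trans Set.diff_subset
  have hYgt : ∀ y ∈ Y, x < y := by
    intro y hy
    have := hYX hy
    simpa using this.2
  refine ⟨⟨insert x p.T, Y, hY, hYpX.trans p.sub, ?_, ?_, hdec⟩, rfl, hYpX, hYgt⟩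
  · intro a ha
    rcases Finset.mem_insert.mp (by exact_mod_cast ha) with rfl | h
    · exact p.sub hx
    · exact p.Tsub (by exact_mod_cast h)
  · intro a ha y hy
    rcases Finset.mem_insert.mp ha with rfl | h
    · exact hYgt y hy
    · exact p.lt a h y (hYpX hy)

noncomputable def gseq (G : Set (Finset ℕ)) (U : Set ℕ) (p0 : GSt G U) : ℕ → GSt G U
  | 0 => p0
  | n + 1 => Classical.choose (exists_step (gseq G U p0 n))

lemma gseq_spec (G : Set (Finset ℕ)) (U : Set ℕ) (p0 : GSt G U) (n : ℕ) :
    (gseq G U p0 (n+1)).T = insert (sInf (gseq G U p0 n).X) (gseq G U p0 n).T ∧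
    (gseq G U p0 (n+1)).X ⊆ (gseq G U p0 n).X ∧
    ∀ y ∈ (gseq G U p0 (n+1)).X, sInf (gseq G U p0 n).X < y :=
  Classical.choose_spec (exists_step (gseq G U p0 n))

lemma finset_subset_iUnion {T : ℕ → Finset ℕ} (hmono : ∀ n m, n ≤ m → T n ⊆ T m)
    (s : Finset ℕ) (hs : ↑s ⊆ ⋃ n, (↑(T n) : Set ℕ)) : ∃ n, s ⊆ T n := by
  classical
  induction s using Finset.induction_on with
  | empty => exact ⟨0, by simp⟩
  | @insert a s ha ih =>
    obtain ⟨n, hn⟩ := ih (fun x hx =>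
      hs (Finset.mem_coe.mpr (Finset.mem_insert_of_mem (Finset.mem_coe.mp hx))))
    obtain ⟨m, hm⟩ := Set.mem_iUnion.mp (hs (Finset.mem_coe.mpr (Finset.mem_insert_self a s)))
    refine ⟨max n m, ?_⟩
    intro x hx
    rcases Finset.mem_insert.mp hx with rfl | hx
    · exact hmono m (max n m) (le_max_right n m) hm
    · exact hmono n (max n m) (le_max_left n m) (hn hx)

lemma union_infinite {T : ℕ → Finset ℕ} (hcard : ∀ n, n ≤ (T n).card) :
    (⋃ n, (↑(T n) : Set ℕ)).Infinite := by
  intro hfin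
  have h : ∀ n, T n ⊆ hfin.toFinset := by
    intro n x hx
    simp only [Set.Finite.mem_toFinset]
    exact Set.mem_iUnion.mpr ⟨n, by exact_mod_cast hx⟩
  have := (hcard (hfin.toFinset.card + 1)).trans (Finset.card_le_card (h _))
  omega

/-- Fusion: a set deciding all its finite subsets. -/
lemma build_Xstar (G : Set (Finset ℕ)) (U : Set ℕ) (hU : U.Infinite) :
    ∃ X : Set ℕ, X.Infinite ∧ X ⊆ U ∧
      ∀ s : Finset ℕ, ↑s ⊆ X → GAcc G s X ∨ GRej G s X := by
  classical
  obtain ⟨Y0, hY0U, hY0, hdec0⟩ := decide_all G {∅} U hU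
  set p0 : GSt G U := ⟨∅, Y0, hY0, hY0U, by simp, by simp, by
    intro s hs
    simp only [Finset.powerset_empty, Finset.mem_singleton] at hs
    subst hs
    exact hdec0 ∅ (by simp)⟩ with hp0
  set g := gseq G U p0 with hg
  set Tn : ℕ → Finset ℕ := fun n => (g n).T with hTn
  set Xn : ℕ → Set ℕ := fun n => (g n).X with hXn
  have hsucc : ∀ n, Tn (n+1) = insert (sInf (Xn n)) (Tn n) ∧ Xn (n+1) ⊆ Xn n ∧
      ∀ y ∈ Xn (n+1), sInf (Xn n) < y := fun n => gseq_spec G U p0 n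
  have hTmono : ∀ n m, n ≤ m → Tn n ⊆ Tn m := by
    intro n m h
    induction m with
    | zero =>
      have : n = 0 := by omega
      subst this; exact subset_rfl
    | succ m ih =>
      rcases Nat.lt_or_ge n (m+1) with h' | h'
      · exact ((ih (by omega)).trans (by rw [(hsucc m).1]; exact Finset.subset_insert _ _))
      · have : n = m + 1 := by omega
        subst this; exact subset_rfl
  have hXmono : ∀ n m, n ≤ m → Xn m ⊆ Xn n := by
    intro n m h
    induction m with
    | zero =>
      have : n = 0 := by omega
      subst this; exact subset_rfl
    | succ m ih =>
      rcases Nat.lt_or_ge n (m+1) with h' | h'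
      · exact (hsucc m).2.1.trans (ih (by omega))
      · have : n = m + 1 := by omega
        subst this; exact subset_rfl
  set Xstar : Set ℕ := ⋃ n, (↑(Tn n) : Set ℕ) with hXstar
  -- D n decreasing
  have hD : ∀ n, Xstar ⊆ ↑(Tn n) ∪ Xn n := by
    intro n z hz
    obtain ⟨m, hm⟩ := Set.mem_iUnion.mp hz
    rcases le_or_gt m n with h | h
    · exact Or.inl (hTmono m n h (by exact_mod_cast hm))
    · -- m > n : induct downwards; show ↑(Tn m) ∪ Xn m ⊆ ↑(Tn k) ∪ Xn k for k ≤ m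
      have key : ∀ k, (↑(Tn (k+1)) ∪ Xn (k+1) : Set ℕ) ⊆ ↑(Tn k) ∪ Xn k := by
        intro k z hz
        rcases hz with hz | hz
        · rw [(hsucc k).1] at hz
          rcases Finset.mem_insert.mp (by exact_mod_cast hz) with rfl | h
          · exact Or.inr (Nat.sInf_mem (g k).inf.nonempty)
          · exact Or.inl (by exact_mod_cast h)
        · exact Or.inr ((hsucc k).2.1 hz)
      have key2 : ∀ j, (↑(Tn (n+j)) ∪ Xn (n+j) : Set ℕ) ⊆ ↑(Tn n) ∪ Xn n := by
        intro j
        induction j with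
        | zero => exact subset_rfl
        | succ j ih => exact (key (n+j)).trans ih
      have : z ∈ (↑(Tn m) ∪ Xn m : Set ℕ) := Or.inl (by exact_mod_cast hm)
      have hm' : m = n + (m - n) := by omega
      rw [hm'] at this
      exact key2 (m-n) this
  have hltTX : ∀ n, ∀ a ∈ Tn n, ∀ y ∈ Xn n, a < y := fun n => (g n).lt
  -- key_m : for a ∈ Xstar there is m with a ∈ Tn m and all of Tn m ≤ a
  have key_m : ∀ a ∈ Xstar, ∃ m, a ∈ Tn m ∧ ∀ b ∈ Tn m, b ≤ a := by
    intro a ha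
    obtain ⟨m0, hm0⟩ := Set.mem_iUnion.mp ha
    have hm0' : a ∈ Tn m0 := by exact_mod_cast hm0
    have hex : ∃ m, a ∈ Tn m := ⟨m0, hm0'⟩
    have hmem : a ∈ Tn (Nat.find hex) := Nat.find_spec hex
    have hmpos : Nat.find hex ≠ 0 := by
      intro h
      rw [h] at hmem
      simp [hTn, hp0, hg, gseq] at hmem
    obtain ⟨k, hk⟩ : ∃ k, Nat.find hex = k + 1 := ⟨Nat.find hex - 1, by omega⟩
    rw [hk] at hmem
    have hnot : a ∉ Tn k := Nat.find_min hex (by omega)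
    rw [(hsucc k).1] at hmem
    have ha' : a = sInf (Xn k) := by
      rcases Finset.mem_insert.mp hmem with h | h
      · exact h
      · exact absurd h hnot
    refine ⟨k+1, ?_, ?_⟩
    · rw [(hsucc k).1, ha']
      exact Finset.mem_insert_self _ _
    · intro b hb
      rw [(hsucc k).1] at hb
      rcases Finset.mem_insert.mp hb with h | h
      · omega
      · have := hltTX k b h (sInf (Xn k)) (Nat.sInf_mem (g k).inf.nonempty)
        omega
  -- Xstar infinite
  have hcard : ∀ n, n ≤ (Tn n).card := by
    intro n
    induction n with
    | zero => simp
    | succ n ih =>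
      rw [(hsucc n).1]
      have hnot : sInf (Xn n) ∉ Tn n := by
        intro h
        have := hltTX n _ h (sInf (Xn n)) (Nat.sInf_mem (g n).inf.nonempty)
        omega
      rw [Finset.card_insert_of_notMem hnot]
      omega
  have hXinf : Xstar.Infinite := union_infinite hcard
  have hXsubU : Xstar ⊆ U := by
    intro z hz
    obtain ⟨m, hm⟩ := Set.mem_iUnion.mp hz
    exact (g m).Tsub (by exact_mod_cast hm)
  refine ⟨Xstar, hXinf, hXsubU, ?_⟩
  intro s hs
  rcases Finset.eq_empty_or_nonempty s with rfl | hsne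
  · -- s = ∅ : decided by Xn 0; Xstar ⊆ Xn 0
    have hX0 : Xstar ⊆ Xn 0 := by
      intro z hz
      rcases hD 0 hz with h | h
      · simp [hTn, hp0, hg, gseq] at h
      · exact h
    rcases (g 0).dec ∅ (by simp) with h | h
    · exact Or.inl (h.mono hX0)
    · exact Or.inr (h.mono hX0)
  · obtain ⟨m, hmem, hle⟩ := key_m (s.max' hsne) (hs (s.max'_mem hsne))
    have hsT : s ⊆ Tn m := by
      intro z hz
      rcases hD m (hs hz) with h | h
      · exact_mod_cast h
      · have h1 := hltTX m _ hmem z h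
        have h2 := Finset.le_max' s z hz
        omega
    -- elements of Xstar above all of s lie in Xn m
    have habove : ∀ z ∈ Xstar, (∀ a ∈ s, a < z) → z ∈ Xn m := by
      intro z hz hgt
      rcases hD m hz with h | h
      · have h1 := hle z (by exact_mod_cast h)
        have h2 := hgt _ (s.max'_mem hsne)
        omega
      · exact h
    rcases (g m).dec s (Finset.mem_powerset.mpr hsT) with h | h
    · left
      intro Z hZ hZX hgt
      have hZm : Z ⊆ Xn m := fun z hz => habove z (hZX hz) (fun a ha => hgt a ha z hz)
      exact h Z hZ hZm hgt
    · right
      intro Y hY hYX hA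
      set Y' : Set ℕ := {y ∈ Y | ∀ a ∈ s, a < y} with hY'
      have hY'sub : Y \ Set.Iic (s.max' hsne) ⊆ Y' := by
        intro y hy
        refine ⟨hy.1, fun a ha => ?_⟩
        have h1 : ¬ y ≤ s.max' hsne := hy.2
        have h2 := Finset.le_max' s a ha
        omega
      have hY'inf : Y'.Infinite := ((hY.diff (Set.finite_Iic _)).mono hY'sub)
      have hY'Xm : Y' ⊆ Xn m := fun y hy => habove y (hYX hy.1) hy.2
      exact h Y' hY'inf hY'Xm (hA.mono (fun y hy => hy.1))

end Galvin

section Galvin2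

lemma rej_bad_finite {G : Set (Finset ℕ)} {s : Finset ℕ} {X : Set ℕ}
    (hrej : GRej G s X) :
    {x ∈ X | (∀ a ∈ s, a < x) ∧ GAcc G (insert x s) X}.Finite := by
  classical
  by_contra hinf
  have hB : {x ∈ X | (∀ a ∈ s, a < x) ∧ GAcc G (insert x s) X}.Infinite := hinf
  refine hrej _ hB (fun x hx => hx.1) ?_
  intro Z hZ hZB hgt
  have hx : sInf Z ∈ Z := Nat.sInf_mem hZ.nonempty
  set x := sInf Z with hxdef
  have hxB := hZB hx
  have hZ' : (Z \ {x}).Infinite := hZ.diff (Set.finite_singleton x)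
  have hZ'X : Z \ {x} ⊆ X := fun z hz => (hZB hz.1).1
  have hgt' : ∀ a ∈ insert x s, ∀ z ∈ Z \ {x}, a < z := by
    intro a ha z hz
    rcases Finset.mem_insert.mp ha with rfl | ha
    · have h1 : x ≤ z := Nat.sInf_le hz.1
      have h2 : z ≠ x := hz.2
      omega
    · exact hgt a ha z hz.1
  obtain ⟨t, htG, hst, hseg⟩ := hxB.2.2 (Z \ {x}) hZ' hZ'X hgt'
  have hEq : (↑(insert x s) ∪ (Z \ {x}) : Set ℕ) = ↑s ∪ Z := by
    ext z
    simp only [Finset.coe_insert, Set.mem_union, Set.mem_insert_iff, Set.mem_diff,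
      Set.mem_singleton_iff, Finset.mem_coe]
    constructor
    · rintro ((rfl | h) | ⟨h, _⟩)
      · exact Or.inr hx
      · exact Or.inl h
      · exact Or.inr h
    · rintro (h | h)
      · exact Or.inl (Or.inr h)
      · by_cases hzx : z = x
        · exact Or.inl (Or.inl hzx)
        · exact Or.inr ⟨h, hzx⟩
  exact ⟨t, htG, (s.subset_insert x).trans hst, hEq ▸ hseg⟩

structure HSt (G : Set (Finset ℕ)) (X : Set ℕ) where
  T : Finset ℕ
  sub : ↑T ⊆ X
  rej : ∀ s ∈ T.powerset, GRej G s X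

lemma exists_hstep {G : Set (Finset ℕ)} {X : Set ℕ} (hX : X.Infinite)
    (hdec : ∀ s : Finset ℕ, ↑s ⊆ X → GAcc G s X ∨ GRej G s X)
    (p : HSt G X) :
    ∃ q : HSt G X, ∃ x, q.T = insert x p.T ∧ p.T.sup id < x := by
  classical
  set Bad : Finset ℕ → Set ℕ :=
    fun s => {x ∈ X | (∀ a ∈ s, a < x) ∧ GAcc G (insert x s) X} with hBad
  have hBadfin : ∀ s ∈ p.T.powerset, (Bad s).Finite :=
    fun s hs => rej_bad_finite (p.rej s hs)
  set E : Set ℕ := Set.Iic (p.T.sup id) ∪ ⋃ s ∈ p.T.powerset, Bad s with hE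
  have hEfin : E.Finite := by
    refine (Set.finite_Iic _).union ?_
    exact Set.Finite.biUnion (p.T.powerset).finite_toSet hBadfin
  obtain ⟨x, hxX, hxE⟩ := (hX.diff hEfin).nonempty
  have hxsup : p.T.sup id < x := by
    have : x ∉ Set.Iic (p.T.sup id) := fun h => hxE (Or.inl h)
    simpa using this
  have hxBad : ∀ s ∈ p.T.powerset, x ∉ Bad s := by
    intro s hs h
    exact hxE (Or.inr (Set.mem_biUnion hs h))
  have hTlt : ∀ a ∈ p.T, a < x := by
    intro a ha
    have := Finset.le_sup (f := id) ha
    simp only [id] at this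
    omega
  refine ⟨⟨insert x p.T, ?_, ?_⟩, x, rfl, hxsup⟩
  · intro a ha
    rcases Finset.mem_insert.mp (by exact_mod_cast ha) with rfl | h
    · exact hxX
    · exact p.sub (by exact_mod_cast h)
  · intro s' hs'
    have hs'sub : s' ⊆ insert x p.T := Finset.mem_powerset.mp hs'
    by_cases hxs : x ∈ s'
    · have hsub : s'.erase x ⊆ p.T := by
        intro z hz
        rcases Finset.mem_insert.mp (hs'sub (Finset.mem_of_mem_erase hz)) with rfl | h
        · exact absurd rfl (Finset.ne_of_mem_erase hz)
        · exact h
      have hs'X : ↑s' ⊆ X := by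
        intro z hz
        rcases Finset.mem_insert.mp (hs'sub (by exact_mod_cast hz)) with rfl | h
        · exact hxX
        · exact p.sub (by exact_mod_cast h)
      rcases hdec s' hs'X with hA | hR
      · exfalso
        refine hxBad (s'.erase x) (Finset.mem_powerset.mpr hsub) ?_
        refine ⟨hxX, fun a ha => hTlt a (hsub ha), ?_⟩
        rwa [Finset.insert_erase hxs]
      · exact hR
    · exact p.rej s' (Finset.mem_powerset.mpr (fun z hz =>
        (Finset.mem_insert.mp (hs'sub hz)).resolve_left (fun h => hxs (h ▸ hz))))

noncomputable def hseq (G : Set (Finset ℕ)) (X : Set ℕ) (hX : X.Infinite)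
    (hdec : ∀ s : Finset ℕ, ↑s ⊆ X → GAcc G s X ∨ GRej G s X)
    (p0 : HSt G X) : ℕ → HSt G X
  | 0 => p0
  | n + 1 => Classical.choose (exists_hstep hX hdec (hseq G X hX hdec p0 n))

lemma build_H (G : Set (Finset ℕ)) (X : Set ℕ) (hX : X.Infinite)
    (hdec : ∀ s : Finset ℕ, ↑s ⊆ X → GAcc G s X ∨ GRej G s X)
    (h0 : GRej G ∅ X) :
    ∃ H : Set ℕ, H.Infinite ∧ H ⊆ X ∧ ∀ s : Finset ℕ, ↑s ⊆ H → GRej G s X := by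
  classical
  set p0 : HSt G X := ⟨∅, by simp, by
    intro s hs
    simp only [Finset.powerset_empty, Finset.mem_singleton] at hs
    subst hs; exact h0⟩ with hp0
  set q := hseq G X hX hdec p0 with hq
  set Tn : ℕ → Finset ℕ := fun n => (q n).T with hTn
  have hsucc : ∀ n, ∃ x, Tn (n+1) = insert x (Tn n) ∧ (Tn n).sup id < x :=
    fun n => Classical.choose_spec (exists_hstep hX hdec (q n))
  have hmono : ∀ n m, n ≤ m → Tn n ⊆ Tn m := by
    intro n m h
    induction m with
    | zero =>
      have : n = 0 := by omega
      subst this; exact subset_rfl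
    | succ m ih =>
      rcases Nat.lt_or_ge n (m+1) with h' | h'
      · obtain ⟨x, hx, -⟩ := hsucc m
        exact (ih (by omega)).trans (by rw [hx]; exact Finset.subset_insert _ _)
      · have : n = m + 1 := by omega
        subst this; exact subset_rfl
  have hcard : ∀ n, n ≤ (Tn n).card := by
    intro n
    induction n with
    | zero => simp
    | succ n ih =>
      obtain ⟨x, hx, hxsup⟩ := hsucc n
      have hnot : x ∉ Tn n := by
        intro h
        have := Finset.le_sup (f := id) h
        simp only [id] at this
        omega
      rw [hx, Finset.card_insert_of_notMem hnot]
      omega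
  refine ⟨⋃ n, (↑(Tn n) : Set ℕ), union_infinite hcard, ?_, ?_⟩
  · intro z hz
    obtain ⟨m, hm⟩ := Set.mem_iUnion.mp hz
    exact (q m).sub hm
  · intro s hs
    obtain ⟨n, hn⟩ := finset_subset_iUnion hmono s hs
    exact (q n).rej s (Finset.mem_powerset.mpr hn)

lemma galvin (G : Set (Finset ℕ)) (U : Set ℕ) (hU : U.Infinite) :
    ∃ H : Set ℕ, H.Infinite ∧ H ⊆ U ∧
      ((∀ Z : Set ℕ, Z.Infinite → Z ⊆ H → ∃ t ∈ G, InitSegSet t Z) ∨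
       (∀ t ∈ G, ¬ ↑t ⊆ H)) := by
  obtain ⟨X, hXinf, hXU, hdec⟩ := build_Xstar G U hU
  rcases hdec ∅ (by simp) with hAcc | hRej
  · refine ⟨X, hXinf, hXU, Or.inl ?_⟩
    intro Z hZ hZX
    obtain ⟨t, htG, -, hseg⟩ := hAcc Z hZ hZX (by simp)
    refine ⟨t, htG, ?_⟩
    simpa using hseg
  · obtain ⟨H, hHinf, hHX, hHrej⟩ := build_H G X hXinf hdec hRej
    refine ⟨H, hHinf, hHX.trans hXU, Or.inr ?_⟩
    intro t htG htH
    exact hHrej t htH X hXinf subset_rfl (gacc_self htG X)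

lemma initSegSet_comp {σ t : Finset ℕ} {Z : Set ℕ}
    (h1 : InitSegSet σ Z) (h2 : InitSegSet t Z) : InitSeg σ t ∨ InitSeg t σ := by
  by_cases hst : σ ⊆ t
  · exact Or.inl ⟨hst, fun a ha b hb hba => h1.2 a ha b (h2.1 hb) hba⟩
  · right
    obtain ⟨a, haσ, hat⟩ := Finset.not_subset.mp hst
    refine ⟨?_, fun a' ha' b hb hba => h2.2 a' ha' b (h1.1 hb) hba⟩
    intro b hb
    rcases le_or_gt b a with h | h
    · exact h1.2 a haσ b (h2.1 hb) h
    · exact absurd (h2.2 b hb a (h1.1 haσ) h.le) hat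

end Galvin2

theorem statement1 (Fr : Front) (c : Finset ℕ → Fin 2) :
    ∃ H : Set ℕ, H.Infinite ∧ H ⊆ Fr.union ∧
      ∀ σ ∈ Fr.F, ∀ τ ∈ Fr.F, ↑σ ⊆ H → ↑τ ⊆ H → c σ = c τ := by
  classical
  have hUinf : Fr.union.Infinite := by
    by_contra hfin
    rw [Set.not_infinite] at hfin
    have himg : ((fun σ : Finset ℕ => (↑σ : Set ℕ)) '' Fr.F).Infinite :=
      Fr.infinite.image (Set.injOn_of_injective Finset.coe_injective)
    have hsub : ((fun σ : Finset ℕ => (↑σ : Set ℕ)) '' Fr.F) ⊆ {A | A ⊆ Fr.union} := by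
      rintro A ⟨σ, hσ, rfl⟩
      intro n hn
      exact ⟨σ, hσ, by exact_mod_cast hn⟩
    exact himg (hfin.finite_subsets.subset hsub)
  set G : Set (Finset ℕ) := {σ | σ ∈ Fr.F ∧ c σ = 0} with hG
  obtain ⟨H, hHinf, hHU, hcase⟩ := galvin G Fr.union hUinf
  refine ⟨H, hHinf, hHU, ?_⟩
  rcases hcase with hAll | hNone
  · have key : ∀ σ ∈ Fr.F, ↑σ ⊆ H → c σ = 0 := by
      intro σ hσ hσH
      set Z : Set ℕ := ↑σ ∪ {x ∈ H | ∀ a ∈ σ, a < x} with hZ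
      have hZH : Z ⊆ H := by
        rintro z (hz | hz)
        · exact hσH hz
        · exact hz.1
      have hZinf : Z.Infinite := by
        have hsub : H \ Set.Iic (σ.sup id) ⊆ Z := by
          intro x hx
          refine Or.inr ⟨hx.1, fun a ha => ?_⟩
          have h1 : ¬ x ≤ σ.sup id := hx.2
          have h2 := Finset.le_sup (f := id) ha
          simp only [id] at h2
          omega
        exact (hHinf.diff (Set.finite_Iic _)).mono hsub
      obtain ⟨t, htG, hseg⟩ := hAll Z hZinf hZH
      have hσseg : InitSegSet σ Z := by
        refine ⟨Set.subset_union_left, ?_⟩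
        rintro a ha b (hb | hb) hba
        · exact_mod_cast hb
        · exact absurd hba (not_le.mpr (hb.2 a ha))
      have heq : σ = t := by
        rcases initSegSet_comp hσseg hseg with h | h
        · exact Fr.antichain σ hσ t htG.1 h
        · exact (Fr.antichain t htG.1 σ hσ h).symm
      rw [heq]; exact htG.2
    intro σ hσ τ hτ hσH hτH
    rw [key σ hσ hσH, key τ hτ hτH]
  · have key : ∀ σ ∈ Fr.F, ↑σ ⊆ H → c σ = 1 := by
      intro σ hσ hσH
      have h1 : σ ∉ G := fun h => hNone σ h hσH
      have h2 : ¬ (c σ = 0) := fun h => h1 ⟨hσ, h⟩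
      have h3 : ∀ v : Fin 2, ¬ v = 0 → v = 1 := by decide
      exact h3 _ h2
    intro σ hσ τ hτ hσH hτH
    rw [key σ hσ hσH, key τ hτ hτH]
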